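/- Fix integers c > 0 and b ≥ 2 with b even, and suppose b² - 4c + 1 ≥ 0. Then the number of two-digit fixed points of S_{[c,b]} (fixed points a with b ≤ a < b²) equals (1/4)·r₂(b² - 4c + 1) + |F^(1)_{[c,b]}|, where r₂(m) is the number of ordered pairs (x,y) of integers with x² + y² = m. -/
import Mathlib

/-- The augmented generalized happy function: `c` plus the sum of the squares
of the base-`b` digits of `a`. -/
def S (c b a : ℕ) : ℕ := c + ((Nat.digits b a).map (· ^ 2)).sum

/-- `r2 m` is the number of ordered pairs `(x, y) ∈ ℤ²` with `x² + y² = m`. -/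
noncomputable def r2 (m : ℤ) : ℕ := Set.ncard {p : ℤ × ℤ | p.1 ^ 2 + p.2 ^ 2 = m}

private lemma int_le_sq (a : ℤ) : a ≤ a ^ 2 := by
  rcases le_or_gt a 0 with h | h
  · nlinarith
  · nlinarith

private lemma digits_two {b a : ℕ} (hb : 2 ≤ b) (h1 : b ≤ a) (h2 : a < b ^ 2) :
    Nat.digits b a = [a % b, a / b] := by
  have hb1 : 1 < b := by omega
  rw [Nat.digits_def' hb1 (by omega : 0 < a),
      Nat.digits_def' hb1 (Nat.div_pos h1 (by omega))]
  have hlt : a / b < b := Nat.div_lt_of_lt_mul (by nlinarith)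
  rw [Nat.div_div_eq_div_mul]
  have h0 : a / (b * b) = 0 := Nat.div_eq_of_lt (by nlinarith)
  rw [h0, Nat.digits_zero, Nat.mod_eq_of_lt hlt]

private lemma S_two {c b a : ℕ} (hb : 2 ≤ b) (h1 : b ≤ a) (h2 : a < b ^ 2) :
    S c b a = c + (a % b) ^ 2 + (a / b) ^ 2 := by
  rw [S, digits_two hb h1 h2]
  simp [List.sum_cons]
  ring

private lemma Tfin (m : ℤ) : {p : ℤ × ℤ | p.1 ^ 2 + p.2 ^ 2 = m}.Finite := by
  apply Set.Finite.subset ((Set.finite_Icc (-m) m).prod (Set.finite_Icc (-m) m))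
  rintro ⟨x, y⟩ h
  simp only [Set.mem_setOf_eq] at h
  have hx : x ^ 2 ≤ m := by nlinarith [sq_nonneg y]
  have hy : y ^ 2 ≤ m := by nlinarith [sq_nonneg x]
  simp only [Set.mem_prod, Set.mem_Icc]
  refine ⟨⟨?_, ?_⟩, ?_, ?_⟩ <;>
    nlinarith [int_le_sq x, int_le_sq y, int_le_sq (-x), int_le_sq (-y)]

private lemma one_le_sq {y : ℤ} (h : 1 ≤ y ∨ y = -1) : 1 ≤ y ^ 2 := by
  rcases h with h | h
  · nlinarith
  · rw [h]; norm_num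

private lemma x_bnd_of_circ {x y bz cz : ℤ} (hb : 0 < bz) (h : x ^ 2 + y ^ 2 = bz ^ 2 - 4 * cz + 1)
    (hc : 1 ≤ cz) (hy : 1 ≤ y ^ 2) : -bz < x ∧ x < bz := by
  have h1 : x ^ 2 < bz ^ 2 := by nlinarith
  constructor
  · nlinarith [sq_nonneg (x + bz)]
  · nlinarith [sq_nonneg (x - bz)]

private lemma y_lt_of_circ {x y bz cz : ℤ} (hb : 0 < bz) (h : x ^ 2 + y ^ 2 = bz ^ 2 - 4 * cz + 1)
    (hc : 1 ≤ cz) : y < bz := by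
  have h1 : y ^ 2 < bz ^ 2 := by nlinarith [sq_nonneg x]
  nlinarith [sq_nonneg (y - bz)]

private def fmap (b a : ℕ) : ℤ × ℤ := (2 * ((a / b : ℕ) : ℤ) - (b : ℤ), 2 * ((a % b : ℕ) : ℤ) - 1)

private def gmap (b a : ℕ) : ℤ × ℤ := (2 * ((a / b : ℕ) : ℤ) - (b : ℤ), -1)

theorem stmt_13 (c b : ℕ) (hc : 0 < c) (hb : 2 ≤ b) (heven : Even b)
    (hpos : 0 ≤ (b : ℤ) ^ 2 - 4 * c + 1) :
    4 * Set.ncard {a : ℕ | b ≤ a ∧ a < b ^ 2 ∧ S c b a = a} =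
      r2 ((b : ℤ) ^ 2 - 4 * c + 1) +
        4 * Set.ncard {a : ℕ | ∃ u : ℕ, 0 < u ∧ u < b ∧ a = u * b ∧ S c b a = a} := by
  obtain ⟨t, ht⟩ := heven
  have hbt : b = 2 * t := by omega
  have htpos : 1 ≤ t := by omega
  have hbz : (b : ℤ) = 2 * (t : ℤ) := by exact_mod_cast congrArg (Nat.cast : ℕ → ℤ) hbt
  have hb0 : 0 < b := by omega
  set m : ℤ := (b : ℤ) ^ 2 - 4 * c + 1 with hm
  have hm4 : m = 4 * (t : ℤ) ^ 2 - 4 * c + 1 := by rw [hm, hbz]; ring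
  have hc1 : (1 : ℤ) ≤ (c : ℤ) := by exact_mod_cast hc
  set D : Set ℕ := {a : ℕ | b ≤ a ∧ a < b ^ 2 ∧ S c b a = a} with hDdef
  set E : Set ℕ := {a : ℕ | ∃ u : ℕ, 0 < u ∧ u < b ∧ a = u * b ∧ S c b a = a} with hEdef
  set T : Set (ℤ × ℤ) := {p : ℤ × ℤ | p.1 ^ 2 + p.2 ^ 2 = m} with hTdef
  set A : Set (ℤ × ℤ) := {p : ℤ × ℤ | p.1 ^ 2 + p.2 ^ 2 = m ∧ Even p.1 ∧ 1 ≤ p.2} with hAdef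
  set A2 : Set (ℤ × ℤ) := {p : ℤ × ℤ | p.1 ^ 2 + p.2 ^ 2 = m ∧ Even p.1 ∧ p.2 ≤ -1} with hA2def
  set B : Set (ℤ × ℤ) := {p : ℤ × ℤ | p.1 ^ 2 + p.2 ^ 2 = m ∧ p.2 = -1} with hBdef
  set E1 : Set (ℤ × ℤ) := {p : ℤ × ℤ | p.1 ^ 2 + p.2 ^ 2 = m ∧ Even p.1} with hE1def
  set E2 : Set (ℤ × ℤ) := {p : ℤ × ℤ | p.1 ^ 2 + p.2 ^ 2 = m ∧ ¬ Even p.1} with hE2def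
  have hTfin : T.Finite := Tfin m
  have hAfin : A.Finite := hTfin.subset (fun p hp => hp.1)
  have hA2fin : A2.Finite := hTfin.subset (fun p hp => hp.1)
  have hBfin : B.Finite := hTfin.subset (fun p hp => hp.1)
  have hE1fin : E1.Finite := hTfin.subset (fun p hp => hp.1)
  have hE2fin : E2.Finite := hTfin.subset (fun p hp => hp.1)
  -- parity facts
  have hsq_even : ∀ x : ℤ, Even x → Even (x ^ 2) := by
    rintro x ⟨k, hk⟩; exact ⟨2 * k ^ 2, by rw [hk]; ring⟩
  have hsq_odd : ∀ x : ℤ, ¬ Even x → ¬ Even (x ^ 2) := by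
    intro x hx
    rw [Int.not_even_iff_odd] at hx ⊢
    obtain ⟨k, hk⟩ := hx
    exact ⟨2 * k ^ 2 + 2 * k, by rw [hk]; ring⟩
  have hmodd : ¬ Even m := by
    rw [Int.not_even_iff_odd]; exact ⟨2 * (t : ℤ) ^ 2 - 2 * c, by rw [hm4]; ring⟩
  have hpar : ∀ x y : ℤ, x ^ 2 + y ^ 2 = m → (Even x ↔ ¬ Even y) := by
    intro x y h
    constructor
    · intro hx hy
      exact hmodd (h ▸ (Even.add (hsq_even x hx) (hsq_even y hy)))
    · intro hy
      by_contra hx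
      rw [Int.not_even_iff_odd] at hx
      obtain ⟨k, hk⟩ := hx
      rcases Int.even_or_odd y with hy2 | hy2
      · exact hy hy2
      · obtain ⟨l, hl⟩ := hy2
        exact hmodd (h ▸ ⟨2 * k ^ 2 + 2 * k + 2 * l ^ 2 + 2 * l + 1, by rw [hk, hl]; ring⟩)
  have hSfix : ∀ a : ℕ, b ≤ a → a < b ^ 2 → (S c b a = a ↔ c + (a % b) ^ 2 + (a / b) ^ 2 = a) := by
    intro a h1 h2
    rw [S_two hb h1 h2]
  ---- Step 1 : the two-digit fixed point set maps onto A ∪ B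
  have hfinj : Set.InjOn (fmap b) D := by
    rintro a ha a' ha' hfe
    have h1 := congrArg Prod.fst hfe
    have h2 := congrArg Prod.snd hfe
    simp only [fmap] at h1 h2
    have hd : a / b = a' / b := by omega
    have hmo : a % b = a' % b := by omega
    have e1 := Nat.div_add_mod a b
    have e2 := Nat.div_add_mod a' b
    rw [hd, hmo] at e1
    omega
  have hfim : fmap b '' D = A ∪ B := by
    ext ⟨x, y⟩
    simp only [hDdef, hAdef, hBdef, Set.mem_image, Set.mem_union, Set.mem_setOf_eq]
    constructor
    · rintro ⟨a, ⟨ha1, ha2, ha3⟩, hfa⟩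
      rw [hSfix a ha1 ha2] at ha3
      have hda := Nat.div_add_mod a b
      have hvlt : a % b < b := Nat.mod_lt _ hb0
      have hx : x = 2 * ((a / b : ℕ) : ℤ) - (b : ℤ) := by
        have := congrArg Prod.fst hfa; simpa [fmap] using this.symm
      have hy : y = 2 * ((a % b : ℕ) : ℤ) - 1 := by
        have := congrArg Prod.snd hfa; simpa [fmap] using this.symm
      have hz : (c : ℤ) + ((a % b : ℕ) : ℤ) ^ 2 + ((a / b : ℕ) : ℤ) ^ 2
          = (b : ℤ) * ((a / b : ℕ) : ℤ) + ((a % b : ℕ) : ℤ) := by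
        have h3 : (c : ℤ) + ((a % b : ℕ) : ℤ) ^ 2 + ((a / b : ℕ) : ℤ) ^ 2 = (a : ℤ) := by
          exact_mod_cast congrArg (Nat.cast : ℕ → ℤ) ha3
        have h4 : (b : ℤ) * ((a / b : ℕ) : ℤ) + ((a % b : ℕ) : ℤ) = (a : ℤ) := by
          exact_mod_cast congrArg (Nat.cast : ℕ → ℤ) hda
        rw [h3, h4]
      have hcirc : x ^ 2 + y ^ 2 = m := by
        rw [hx, hy, hm]; linear_combination 4 * hz
      have hevenx : Even x := by
        rw [hx, hbz]; exact ⟨((a / b : ℕ) : ℤ) - t, by ring⟩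
      rcases Nat.eq_zero_or_pos (a % b) with hv0 | hv1
      · right; exact ⟨hcirc, by rw [hy, hv0]; simp⟩
      · left
        refine ⟨hcirc, hevenx, ?_⟩
        have : (1 : ℤ) ≤ ((a % b : ℕ) : ℤ) := by exact_mod_cast hv1
        omega
    · rintro (⟨hcirc, ⟨k, hk⟩, hy1⟩ | ⟨hcirc, hy1⟩)
      · -- A case : x = k + k, y = 2*j+1 ≥ 1
        have hyodd : ¬ Even y := (hpar x y hcirc).mp ⟨k, hk⟩
        rw [Int.not_even_iff_odd] at hyodd
        obtain ⟨j, hj⟩ := hyodd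
        have hj0 : 0 ≤ j := by omega
        have hbzpos : (0 : ℤ) < (b : ℤ) := by exact_mod_cast hb0
        have hcircm : x ^ 2 + y ^ 2 = (b : ℤ) ^ 2 - 4 * c + 1 := by rw [← hm]; exact hcirc
        obtain ⟨hxlt1, hxlt2⟩ := x_bnd_of_circ hbzpos hcircm hc1 (one_le_sq (Or.inl hy1))
        have hylt : y < (b : ℤ) := y_lt_of_circ hbzpos hcircm hc1
        obtain ⟨u, hu⟩ : ∃ u : ℕ, (u : ℤ) = k + t :=
          ⟨(k + (t : ℤ)).toNat, Int.toNat_of_nonneg (by omega)⟩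
        obtain ⟨v, hv⟩ : ∃ v : ℕ, (v : ℤ) = j + 1 :=
          ⟨(j + 1).toNat, Int.toNat_of_nonneg (by omega)⟩
        have hu1 : 1 ≤ u := by omega
        have hub : u < b := by omega
        have hv1 : 1 ≤ v := by omega
        have hvb : v < b := by omega
        have hble : b ≤ v + b * u := by
          have := Nat.mul_le_mul_left b hu1
          omega
        have hlt2 : v + b * u < b ^ 2 := by
          have h1 := Nat.mul_le_mul_left b (show u + 1 ≤ b by omega)
          rw [Nat.mul_add, Nat.mul_one] at h1
          rw [pow_two]
          omega
        have hmod : (v + b * u) % b = v := by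
          rw [Nat.add_mul_mod_self_left, Nat.mod_eq_of_lt hvb]
        have hdiv : (v + b * u) / b = u := by
          rw [Nat.add_mul_div_left _ _ hb0, Nat.div_eq_of_lt hvb]; omega
        have hcirc2 : (2 * k) ^ 2 + (2 * j + 1) ^ 2 = 4 * (t : ℤ) ^ 2 - 4 * c + 1 := by
          have hx2 : x = 2 * k := by omega
          rw [← hx2, ← hj, hcirc, hm4]
        have h4g : 4 * ((c : ℤ) + ((j : ℤ) + 1) ^ 2 + ((k : ℤ) + t) ^ 2)
            = 4 * (((j : ℤ) + 1) + 2 * (t : ℤ) * ((k : ℤ) + t)) := by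
          linear_combination hcirc2
        have hgoal : (c : ℤ) + (v : ℤ) ^ 2 + (u : ℤ) ^ 2 = (v : ℤ) + (b : ℤ) * (u : ℤ) := by
          rw [hu, hv, hbz]; linarith
        refine ⟨v + b * u, ⟨hble, hlt2, ?_⟩, ?_⟩
        · rw [hSfix _ hble hlt2, hmod, hdiv]
          exact_mod_cast hgoal
        · have hfst : 2 * (((v + b * u) / b : ℕ) : ℤ) - (b : ℤ) = x := by
            rw [hdiv, hu, hbz]; omega
          have hsnd : 2 * (((v + b * u) % b : ℕ) : ℤ) - 1 = y := by
            rw [hmod, hv, hj]; ring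
          simp only [fmap]
          exact Prod.ext hfst hsnd
      · -- B case : y = -1
        have hx2eq : x ^ 2 = 4 * (t : ℤ) ^ 2 - 4 * (c : ℤ) := by
          rw [hy1] at hcirc; rw [hm4] at hcirc; linarith
        have hevenx : Even x := by
          by_contra hodd
          exact hsq_odd x hodd ⟨2 * (t : ℤ) ^ 2 - 2 * c, by rw [hx2eq]; ring⟩
        obtain ⟨k, hk⟩ := hevenx
        have hbzpos : (0 : ℤ) < (b : ℤ) := by exact_mod_cast hb0
        have hcircm : x ^ 2 + y ^ 2 = (b : ℤ) ^ 2 - 4 * c + 1 := by rw [← hm]; exact hcirc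
        obtain ⟨hxlt1, hxlt2⟩ := x_bnd_of_circ hbzpos hcircm hc1 (one_le_sq (Or.inr hy1))
        obtain ⟨u, hu⟩ : ∃ u : ℕ, (u : ℤ) = k + t :=
          ⟨(k + (t : ℤ)).toNat, Int.toNat_of_nonneg (by omega)⟩
        have hu1 : 1 ≤ u := by omega
        have hub : u < b := by omega
        have hble : b ≤ b * u := by
          have := Nat.mul_le_mul_left b hu1
          omega
        have hlt2 : b * u < b ^ 2 := by
          have h1 := Nat.mul_le_mul_left b (show u + 1 ≤ b by omega)
          rw [Nat.mul_add, Nat.mul_one] at h1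
          rw [pow_two]
          omega
        have hmod : (b * u) % b = 0 := Nat.mul_mod_right b u
        have hdiv : (b * u) / b = u := Nat.mul_div_cancel_left u hb0
        have hcirc2 : (2 * k) ^ 2 = 4 * (t : ℤ) ^ 2 - 4 * c := by
          have hx2 : x = 2 * k := by omega
          rw [← hx2]; exact hx2eq
        have h4g : 4 * ((c : ℤ) + 0 ^ 2 + ((k : ℤ) + t) ^ 2)
            = 4 * (2 * (t : ℤ) * ((k : ℤ) + t)) := by
          linear_combination hcirc2
        have hgoal : (c : ℤ) + (0 : ℤ) ^ 2 + (u : ℤ) ^ 2 = (b : ℤ) * (u : ℤ) := by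
          rw [hu, hbz]; linarith
        refine ⟨b * u, ⟨hble, hlt2, ?_⟩, ?_⟩
        · rw [hSfix _ hble hlt2, hmod, hdiv]
          exact_mod_cast hgoal
        · have hfst : 2 * (((b * u) / b : ℕ) : ℤ) - (b : ℤ) = x := by
            rw [hdiv, hu, hbz]; omega
          have hsnd : 2 * (((b * u) % b : ℕ) : ℤ) - 1 = y := by
            rw [hmod, hy1]; simp
          simp only [fmap]
          exact Prod.ext hfst hsnd
  ---- Step 2 : the E set maps onto B
  have hginj : Set.InjOn (gmap b) E := by
    rintro a ⟨u, hu0, hub, hau, -⟩ a' ⟨u', hu0', hub', hau', -⟩ hfe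
    have h1 := congrArg Prod.fst hfe
    simp only [gmap] at h1
    have hd : a / b = a' / b := by omega
    have e1 : a / b = u := by rw [hau]; exact Nat.mul_div_cancel _ hb0
    have e2 : a' / b = u' := by rw [hau']; exact Nat.mul_div_cancel _ hb0
    have : u = u' := by omega
    rw [hau, hau', this]
  have hgim : gmap b '' E = B := by
    ext ⟨x, y⟩
    simp only [hEdef, hBdef, Set.mem_image, Set.mem_setOf_eq]
    constructor
    · rintro ⟨a, ⟨u, hu0, hub, hau, hfix⟩, hfa⟩
      subst hau
      have hdiv : u * b / b = u := Nat.mul_div_cancel _ hb0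
      have hmod : u * b % b = 0 := Nat.mul_mod_left u b
      have hble : b ≤ u * b := by
        have := Nat.mul_le_mul_right b (show 1 ≤ u by omega)
        omega
      have hlt2 : u * b < b ^ 2 := by
        have h1 := Nat.mul_le_mul_right b (show u + 1 ≤ b by omega)
        rw [Nat.add_mul, Nat.one_mul] at h1
        rw [pow_two]
        omega
      rw [hSfix _ hble hlt2, hmod, hdiv] at hfix
      have hz : (c : ℤ) + (0 : ℤ) ^ 2 + (u : ℤ) ^ 2 = (u : ℤ) * (b : ℤ) := by
        exact_mod_cast congrArg (Nat.cast : ℕ → ℤ) hfix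
      have hx : x = 2 * (u : ℤ) - (b : ℤ) := by
        have := congrArg Prod.fst hfa; simp only [gmap, hdiv] at this; omega
      have hy : y = -1 := by
        have := congrArg Prod.snd hfa; simpa [gmap] using this.symm
      refine ⟨?_, hy⟩
      rw [hx, hy, hm]; linear_combination 4 * hz
    · rintro ⟨hcirc, hy1⟩
      have hx2eq : x ^ 2 = 4 * (t : ℤ) ^ 2 - 4 * (c : ℤ) := by
        rw [hy1] at hcirc; rw [hm4] at hcirc; linarith
      have hevenx : Even x := by
        by_contra hodd
        exact hsq_odd x hodd ⟨2 * (t : ℤ) ^ 2 - 2 * c, by rw [hx2eq]; ring⟩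
      obtain ⟨k, hk⟩ := hevenx
      have hbzpos : (0 : ℤ) < (b : ℤ) := by exact_mod_cast hb0
      have hcircm : x ^ 2 + y ^ 2 = (b : ℤ) ^ 2 - 4 * c + 1 := by rw [← hm]; exact hcirc
      obtain ⟨hxlt1, hxlt2⟩ := x_bnd_of_circ hbzpos hcircm hc1 (one_le_sq (Or.inr hy1))
      obtain ⟨u, hu⟩ : ∃ u : ℕ, (u : ℤ) = k + t :=
        ⟨(k + (t : ℤ)).toNat, Int.toNat_of_nonneg (by omega)⟩
      have hu1 : 1 ≤ u := by omega
      have hub : u < b := by omega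
      have hble : b ≤ u * b := by
        have := Nat.mul_le_mul_right b (show 1 ≤ u by omega)
        omega
      have hlt2 : u * b < b ^ 2 := by
        have h1 := Nat.mul_le_mul_right b (show u + 1 ≤ b by omega)
        rw [Nat.add_mul, Nat.one_mul] at h1
        rw [pow_two]
        omega
      have hmod : u * b % b = 0 := Nat.mul_mod_left u b
      have hdiv : u * b / b = u := Nat.mul_div_cancel _ hb0
      have hcirc2 : (2 * k) ^ 2 = 4 * (t : ℤ) ^ 2 - 4 * c := by
        have hx2 : x = 2 * k := by omega
        rw [← hx2]; exact hx2eq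
      have h4g : 4 * ((c : ℤ) + (0 : ℤ) ^ 2 + ((k : ℤ) + t) ^ 2)
          = 4 * (((k : ℤ) + t) * (2 * (t : ℤ))) := by
        linear_combination hcirc2
      have hgoal : (c : ℤ) + (0 : ℤ) ^ 2 + (u : ℤ) ^ 2 = (u : ℤ) * (b : ℤ) := by
        rw [hu, hbz]; linarith
      refine ⟨u * b, ⟨u, by omega, hub, rfl, ?_⟩, ?_⟩
      · rw [hSfix _ hble hlt2, hmod, hdiv]
        exact_mod_cast hgoal
      · have hfst : 2 * ((u * b / b : ℕ) : ℤ) - (b : ℤ) = x := by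
          rw [hdiv, hu, hbz]; omega
        simp only [gmap]
        exact Prod.ext hfst hy1.symm
  ---- Step 3 : counting T
  have hTsplit : T = E1 ∪ E2 := by
    ext p
    simp only [hTdef, hE1def, hE2def, Set.mem_union, Set.mem_setOf_eq]
    tauto
  have hdisj12 : Disjoint E1 E2 := by
    rw [Set.disjoint_left]
    rintro p ⟨-, h⟩ ⟨-, h'⟩
    exact h' h
  have hswapim : Prod.swap '' E1 = E2 := by
    ext ⟨x, y⟩
    simp only [hE1def, hE2def, Set.mem_image, Set.mem_setOf_eq, Prod.exists]
    constructor
    · rintro ⟨a, b', ⟨hab, heva⟩, heq⟩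
      rw [Prod.swap_prod_mk, Prod.mk.injEq] at heq
      obtain ⟨h1, h2⟩ := heq
      subst h1; subst h2
      exact ⟨by linarith [hab], (hpar a b' hab).mp heva⟩
    · rintro ⟨hcirc, hx⟩
      have hey : Even y := by
        by_contra hy
        exact hx ((hpar x y hcirc).mpr hy)
      exact ⟨y, x, ⟨by linarith, hey⟩, rfl⟩
  have hE1split : E1 = A ∪ A2 := by
    ext ⟨x, y⟩
    simp only [hE1def, hAdef, hA2def, Set.mem_union, Set.mem_setOf_eq]
    constructor
    · rintro ⟨hcirc, hev⟩
      have hy0 : y ≠ 0 := by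
        intro h0
        rw [h0] at hcirc
        exact hmodd (by rw [← hcirc]; simpa using hsq_even x hev)
      rcases lt_or_ge y 0 with h | h
      · right; exact ⟨hcirc, hev, by omega⟩
      · left; exact ⟨hcirc, hev, by omega⟩
    · rintro (⟨hcirc, hev, -⟩ | ⟨hcirc, hev, -⟩) <;> exact ⟨hcirc, hev⟩
  have hdisjAA2 : Disjoint A A2 := by
    rw [Set.disjoint_left]
    rintro p ⟨-, -, h⟩ ⟨-, -, h'⟩
    omega
  have hnegim : (fun p : ℤ × ℤ => (p.1, -p.2)) '' A = A2 := by
    ext ⟨x, y⟩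
    simp only [hAdef, hA2def, Set.mem_image, Set.mem_setOf_eq, Prod.exists]
    constructor
    · rintro ⟨a, b', ⟨hab, heva, hb1⟩, heq⟩
      simp only [Prod.mk.injEq] at heq
      obtain ⟨h1, h2⟩ := heq
      subst h1; subst h2
      refine ⟨by linarith [hab], heva, by omega⟩
    · rintro ⟨hcirc, hev, hy1⟩
      exact ⟨x, -y, ⟨by linarith, hev, by omega⟩, by simp⟩
  have hneginj : Function.Injective (fun p : ℤ × ℤ => (p.1, -p.2)) := by
    rintro ⟨a, b'⟩ ⟨a', b''⟩ h
    simp only [Prod.mk.injEq] at h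
    exact Prod.ext h.1 (by omega)
  ---- Assemble
  have hdisjAB : Disjoint A B := by
    rw [Set.disjoint_left]
    rintro p ⟨-, -, h⟩ ⟨-, h'⟩
    omega
  have hcardD : D.ncard = A.ncard + B.ncard := by
    rw [← Set.ncard_image_of_injOn hfinj, hfim, Set.ncard_union_eq hdisjAB hAfin hBfin]
  have hcardE : E.ncard = B.ncard := by
    rw [← Set.ncard_image_of_injOn hginj, hgim]
  have hcardA2 : A2.ncard = A.ncard := by
    rw [← hnegim, Set.ncard_image_of_injective _ hneginj]
  have hcardE2 : E2.ncard = E1.ncard := by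
    rw [← hswapim, Set.ncard_image_of_injective _ Prod.swap_injective]
  have hcardT : T.ncard = 4 * A.ncard := by
    rw [hTsplit, Set.ncard_union_eq hdisj12 hE1fin hE2fin, hcardE2,
      hE1split, Set.ncard_union_eq hdisjAA2 hAfin hA2fin, hcardA2]
    ring
  have hr2 : r2 m = T.ncard := rfl
  rw [hr2, hcardT, hcardD, hcardE]
  ring
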